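/- Let n ≥ 1 and let s : S^{2n-1} → ℂ^{2n} be a continuous map such that for every x ∈ S^{2n-1} one has s(x) ≠ 0 and Σ_{k=1}^{2n} s_k(x)² = 0 (s is a nowhere-vanishing isotropic section). Then Re s(x) ≠ 0 and Im s(x) ≠ 0 for all x, and the two normalized maps S^{2n-1} → S^{2n-1} given by x ↦ Re s(x)/‖Re s(x)‖ and x ↦ Im s(x)/‖Im s(x)‖ are homotopic. In particular they have the same degree (homotopy class in π_{2n-1}(S^{2n-1})). -/

import Mathlib

open scoped RealInnerProductSpace

/-- The componentwise real part of a vector in `ℂ^m`, as a vector in `ℝ^m`. -/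
noncomputable def reVec {m : ℕ} (v : EuclideanSpace ℂ (Fin m)) : EuclideanSpace ℝ (Fin m) :=
  WithLp.toLp 2 (fun k => (v k).re)

/-- The componentwise imaginary part of a vector in `ℂ^m`, as a vector in `ℝ^m`. -/
noncomputable def imVec {m : ℕ} (v : EuclideanSpace ℂ (Fin m)) : EuclideanSpace ℝ (Fin m) :=
  WithLp.toLp 2 (fun k => (v k).im)

set_option maxHeartbeats 1000000 in
/-- A nowhere-vanishing isotropic section `s : S^{2n-1} → ℂ^{2n}` has
nowhere-vanishing real and imaginary parts, and the normalized maps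
`x ↦ Re s(x)/‖Re s(x)‖` and `x ↦ Im s(x)/‖Im s(x)‖` from `S^{2n-1}` to itself are homotopic. -/
theorem real_and_imaginary_winding_numbers_agree (n : ℕ) (hn : 1 ≤ n)
    (s : C(Metric.sphere (0 : EuclideanSpace ℝ (Fin (2 * n))) 1, EuclideanSpace ℂ (Fin (2 * n))))
    (hne : ∀ x, s x ≠ 0)
    (hiso : ∀ x, ∑ k, (s x k) ^ 2 = 0) :
    (∀ x, reVec (s x) ≠ 0 ∧ imVec (s x) ≠ 0) ∧
    ∃ f g : C(Metric.sphere (0 : EuclideanSpace ℝ (Fin (2 * n))) 1,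
              Metric.sphere (0 : EuclideanSpace ℝ (Fin (2 * n))) 1),
      (∀ x, (f x : EuclideanSpace ℝ (Fin (2 * n))) = ‖reVec (s x)‖⁻¹ • reVec (s x)) ∧
      (∀ x, (g x : EuclideanSpace ℝ (Fin (2 * n))) = ‖imVec (s x)‖⁻¹ • imVec (s x)) ∧
      f.Homotopic g := by
  classical
  set a : Metric.sphere (0 : EuclideanSpace ℝ (Fin (2 * n))) 1 →
      EuclideanSpace ℝ (Fin (2 * n)) := fun x => reVec (s x) with ha_def
  set b : Metric.sphere (0 : EuclideanSpace ℝ (Fin (2 * n))) 1 →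
      EuclideanSpace ℝ (Fin (2 * n)) := fun x => imVec (s x) with hb_def
  -- real/imaginary part identities from isotropy
  have hsq : ∀ x, (∑ k, (a x k) ^ 2) = ∑ k, (b x k) ^ 2 := by
    intro x
    have h1 : (∑ k, (s x k) ^ 2).re = 0 := by rw [hiso x]; simp
    rw [Complex.re_sum] at h1
    simp only [pow_two, Complex.mul_re] at h1
    rw [Finset.sum_sub_distrib] at h1
    simp only [ha_def, hb_def, reVec, imVec, PiLp.toLp_apply, pow_two]
    linarith
  have hip : ∀ x, (∑ k, a x k * b x k) = 0 := by
    intro x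
    have h1 : (∑ k, (s x k) ^ 2).im = 0 := by rw [hiso x]; simp
    rw [Complex.im_sum] at h1
    simp only [pow_two, Complex.mul_im] at h1
    have h2 : ∑ k, 2 * ((s x k).re * (s x k).im) = 0 := by
      rw [← h1]; exact Finset.sum_congr rfl fun k _ => by ring
    rw [← Finset.mul_sum] at h2
    simp only [ha_def, hb_def, reVec, imVec, PiLp.toLp_apply]
    linarith
  have hnormsq : ∀ (w : EuclideanSpace ℝ (Fin (2 * n))), ‖w‖ ^ 2 = ∑ k, (w k) ^ 2 := by
    intro w
    rw [← real_inner_self_eq_norm_sq, PiLp.inner_apply]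
    simp [pow_two]
  have hinner : ∀ x, ⟪a x, b x⟫ = 0 := by
    intro x
    rw [PiLp.inner_apply]
    simpa [mul_comm] using hip x
  have hnorm_eq : ∀ x, ‖a x‖ = ‖b x‖ := by
    intro x
    have h2 : ‖a x‖ ^ 2 = ‖b x‖ ^ 2 := by rw [hnormsq, hnormsq]; exact hsq x
    nlinarith [norm_nonneg (a x), norm_nonneg (b x)]
  have hane : ∀ x, a x ≠ 0 ∧ b x ≠ 0 := by
    intro x
    have key : ¬ (a x = 0 ∧ b x = 0) := by
      rintro ⟨h1, h2⟩
      apply hne x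
      ext k
      have hr : a x k = 0 := congrArg (fun w => w k) h1
      have hi : b x k = 0 := congrArg (fun w => w k) h2
      exact Complex.ext hr hi
    constructor
    · intro h1
      exact key ⟨h1, norm_eq_zero.mp (by rw [← hnorm_eq x, h1, norm_zero])⟩
    · intro h2
      exact key ⟨norm_eq_zero.mp (by rw [hnorm_eq x, h2, norm_zero]), h2⟩
  refine ⟨hane, ?_⟩
  have hacont : Continuous a :=
    (PiLp.continuous_toLp _ _).comp <| continuous_pi fun k => Complex.continuous_re.comp ((PiLp.continuous_apply 2 _ k).comp s.continuous)
  have hbcont : Continuous b :=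
    (PiLp.continuous_toLp _ _).comp <| continuous_pi fun k => Complex.continuous_im.comp ((PiLp.continuous_apply 2 _ k).comp s.continuous)
  set u : Metric.sphere (0 : EuclideanSpace ℝ (Fin (2 * n))) 1 →
      EuclideanSpace ℝ (Fin (2 * n)) := fun x => ‖a x‖⁻¹ • a x with hu_def
  set v : Metric.sphere (0 : EuclideanSpace ℝ (Fin (2 * n))) 1 →
      EuclideanSpace ℝ (Fin (2 * n)) := fun x => ‖b x‖⁻¹ • b x with hv_def
  have hucont : Continuous u :=
    ((hacont.norm.inv₀ fun x => norm_ne_zero_iff.mpr (hane x).1)).smul hacont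
  have hvcont : Continuous v :=
    ((hbcont.norm.inv₀ fun x => norm_ne_zero_iff.mpr (hane x).2)).smul hbcont
  have hu_norm : ∀ x, ‖u x‖ = 1 := fun x => norm_smul_inv_norm (hane x).1
  have hv_norm : ∀ x, ‖v x‖ = 1 := fun x => norm_smul_inv_norm (hane x).2
  have huv : ∀ x, ⟪u x, v x⟫ = 0 := by
    intro x
    simp only [hu_def, hv_def, real_inner_smul_left, real_inner_smul_right, hinner x, mul_zero]
  have hcomb : ∀ (c d : ℝ) x, c ^ 2 + d ^ 2 = 1 → ‖c • u x + d • v x‖ = 1 := by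
    intro c d x hcd
    have h2 : ‖c • u x + d • v x‖ ^ 2 = 1 := by
      rw [norm_add_sq_real]
      simp only [norm_smul, real_inner_smul_left, real_inner_smul_right, huv x, hu_norm x,
        hv_norm x, mul_zero, mul_one, Real.norm_eq_abs]
      nlinarith [sq_abs c, sq_abs d]
    nlinarith [norm_nonneg (c • u x + d • v x)]
  have humem : ∀ x, u x ∈ Metric.sphere (0 : EuclideanSpace ℝ (Fin (2 * n))) 1 := fun x => by
    simpa [mem_sphere_iff_norm] using hu_norm x
  have hvmem : ∀ x, v x ∈ Metric.sphere (0 : EuclideanSpace ℝ (Fin (2 * n))) 1 := fun x => by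
    simpa [mem_sphere_iff_norm] using hv_norm x
  refine ⟨⟨fun x => ⟨u x, humem x⟩, (hucont.subtype_mk humem)⟩,
          ⟨fun x => ⟨v x, hvmem x⟩, (hvcont.subtype_mk hvmem)⟩,
          fun x => rfl, fun x => rfl, ?_⟩
  set c : unitInterval → ℝ := fun t => Real.cos (Real.pi / 2 * t) with hc_def
  set d : unitInterval → ℝ := fun t => Real.sin (Real.pi / 2 * t) with hd_def
  have hcd : ∀ t, c t ^ 2 + d t ^ 2 = 1 := fun t => by
    simpa [hc_def, hd_def] using Real.cos_sq_add_sin_sq (Real.pi / 2 * t)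
  set H : unitInterval × Metric.sphere (0 : EuclideanSpace ℝ (Fin (2 * n))) 1 →
      EuclideanSpace ℝ (Fin (2 * n)) :=
    fun p => c p.1 • u p.2 + d p.1 • v p.2 with hH_def
  have hHmem : ∀ p, H p ∈ Metric.sphere (0 : EuclideanSpace ℝ (Fin (2 * n))) 1 := fun p => by
    simpa [mem_sphere_iff_norm] using hcomb (c p.1) (d p.1) p.2 (hcd p.1)
  have hHcont : Continuous H := by
    apply Continuous.add
    · exact ((Real.continuous_cos.comp ((continuous_const.mul continuous_subtype_val).comp
        continuous_fst))).smul (hucont.comp continuous_snd)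
    · exact ((Real.continuous_sin.comp ((continuous_const.mul continuous_subtype_val).comp
        continuous_fst))).smul (hvcont.comp continuous_snd)
  refine ⟨⟨⟨fun p => ⟨H p, hHmem p⟩, hHcont.subtype_mk hHmem⟩, ?_, ?_⟩⟩
  · intro x
    ext : 1
    show c 0 • u x + d 0 • v x = u x
    have h1 : c 0 = 1 := by simp [hc_def]
    have h2 : d 0 = 0 := by simp [hd_def]
    rw [h1, h2, one_smul, zero_smul, add_zero]
  · intro x
    ext : 1
    show c 1 • u x + d 1 • v x = v x
    have h1 : c 1 = 0 := by
      simp [hc_def, Real.cos_pi_div_two]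
    have h2 : d 1 = 1 := by
      simp [hd_def, Real.sin_pi_div_two]
    rw [h1, h2, one_smul, zero_smul, zero_add]
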